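/- Let C be a convex subset of a real vector space and f, g : C → ℝ affine functions. If f and g represent the same total preorder on C (for all x, y ∈ C: f(x) ≤ f(y) ⟺ g(x) ≤ g(y)), and f is non-constant, then there exist α > 0 and β ∈ ℝ such that g = αf + β. -/

import Mathlib

theorem stmt_16 {V : Type*} [AddCommGroup V] [Module ℝ V]
    (C : Set V) (hC : Convex ℝ C) (f g : V → ℝ)
    (hf : ∀ x ∈ C, ∀ y ∈ C, ∀ t : ℝ, t ∈ Set.Icc (0:ℝ) 1 →
      f (t • x + (1 - t) • y) = t * f x + (1 - t) * f y)
    (hg : ∀ x ∈ C, ∀ y ∈ C, ∀ t : ℝ, t ∈ Set.Icc (0:ℝ) 1 →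
      g (t • x + (1 - t) • y) = t * g x + (1 - t) * g y)
    (hrep : ∀ x ∈ C, ∀ y ∈ C, (f x ≤ f y ↔ g x ≤ g y))
    (hnc : ∃ x ∈ C, ∃ y ∈ C, f x ≠ f y) :
    ∃ α : ℝ, 0 < α ∧ ∃ β : ℝ, ∀ x ∈ C, g x = α * f x + β := by
  -- key lemma: f-affine combinations transfer to g
  have key : ∀ a ∈ C, ∀ b ∈ C, ∀ c ∈ C, ∀ t : ℝ, t ∈ Set.Icc (0:ℝ) 1 →
      f c = t * f a + (1 - t) * f b → g c = t * g a + (1 - t) * g b := by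
    intro a ha b hb c hc t ht hfc
    have hp : t • a + (1 - t) • b ∈ C :=
      hC ha hb (a := t) (b := 1 - t) ht.1 (by linarith [ht.2]) (by ring)
    have hfp : f (t • a + (1 - t) • b) = f c := by rw [hf a ha b hb t ht, hfc]
    have hgp : g (t • a + (1 - t) • b) = g c := by
      have h1 := (hrep _ hp c hc).mp (le_of_eq hfp)
      have h2 := (hrep c hc _ hp).mp (le_of_eq hfp.symm)
      linarith
    rw [← hgp, hg a ha b hb t ht]
  -- pick x₀ y₀ with f x₀ < f y₀
  obtain ⟨x₀, hx₀, y₀, hy₀, hne⟩ := hnc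
  obtain ⟨x₀, hx₀, y₀, hy₀, hlt⟩ :
      ∃ x₀ ∈ C, ∃ y₀ ∈ C, f x₀ < f y₀ := by
    rcases lt_or_gt_of_ne hne with h | h
    · exact ⟨x₀, hx₀, y₀, hy₀, h⟩
    · exact ⟨y₀, hy₀, x₀, hx₀, h⟩
  have hglt : g x₀ < g y₀ := by
    by_contra h
    exact absurd ((hrep y₀ hy₀ x₀ hx₀).mpr (not_lt.mp h)) (not_le.mpr hlt)
  set d : ℝ := f y₀ - f x₀ with hd
  have hd0 : 0 < d := by simp [hd]; linarith
  refine ⟨(g y₀ - g x₀) / d, div_pos (by linarith) hd0, g x₀ - (g y₀ - g x₀) / d * f x₀, ?_⟩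
  intro x hx
  set α := (g y₀ - g x₀) / d with hα
  have hαd : α * d = g y₀ - g x₀ := div_mul_cancel₀ _ (ne_of_gt hd0)
  rcases le_or_gt (f x₀) (f x) with h1 | h1
  · rcases le_or_gt (f x) (f y₀) with h2 | h2
    · -- between
      set t : ℝ := (f x - f x₀) / d with htdef
      have ht : t ∈ Set.Icc (0:ℝ) 1 := by
        constructor
        · exact div_nonneg (by linarith) (le_of_lt hd0)
        · rw [htdef, div_le_one hd0]; simp [hd]; linarith
      have hfc : f x = t * f y₀ + (1 - t) * f x₀ := by
        have h' : t * d = f x - f x₀ := div_mul_cancel₀ _ (ne_of_gt hd0)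
        rw [hd] at h'; linear_combination -h'
      have hk := key y₀ hy₀ x₀ hx₀ x hx t ht hfc
      have hmul : t * (g y₀ - g x₀) = α * (f x - f x₀) := by rw [htdef, hα]; ring
      rw [hk]; linear_combination hmul
    · -- f x > f y₀ : y₀ between x₀ and x
      set t : ℝ := d / (f x - f x₀) with htdef
      have hden : 0 < f x - f x₀ := by linarith
      have ht : t ∈ Set.Icc (0:ℝ) 1 := by
        constructor
        · exact le_of_lt (div_pos hd0 hden)
        · rw [htdef, div_le_one hden]; simp [hd]; linarith
      have hfc : f y₀ = t * f x + (1 - t) * f x₀ := by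
        have h' : t * (f x - f x₀) = d := div_mul_cancel₀ _ (ne_of_gt hden)
        rw [hd] at h'; linear_combination -h'
      have hgy := key x hx x₀ hx₀ y₀ hy₀ t ht hfc
      -- solve for g x
      have ht0 : t ≠ 0 := ne_of_gt (div_pos hd0 hden)
      have ht' : t * (f x - f x₀) = d := div_mul_cancel₀ _ (ne_of_gt hden)
      -- g y₀ = t g x + (1-t) g x₀ and t(fx - fx₀)=d
      have : t * g x = t * (α * f x + (g x₀ - α * f x₀)) := by
        have expand : t * (α * f x + (g x₀ - α * f x₀)) = α * (t * (f x - f x₀)) + t * g x₀ := by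
          ring
        rw [expand, ht', hαd]
        linarith [hgy]
      exact mul_left_cancel₀ ht0 this
  · -- f x < f x₀ : x₀ between x and y₀
    set t : ℝ := (f x₀ - f x) / (f y₀ - f x) with htdef
    have hden : 0 < f y₀ - f x := by linarith
    have ht : t ∈ Set.Icc (0:ℝ) 1 := by
      constructor
      · exact div_nonneg (by linarith) (le_of_lt hden)
      · rw [htdef, div_le_one hden]; linarith
    have hfc : f x₀ = t * f y₀ + (1 - t) * f x := by
      have h' : t * (f y₀ - f x) = f x₀ - f x := div_mul_cancel₀ _ (ne_of_gt hden)
      linear_combination -h'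
    have hgx := key y₀ hy₀ x hx x₀ hx₀ t ht hfc
    have ht1 : 1 - t ≠ 0 := by
      have : t < 1 := by rw [htdef, div_lt_one hden]; linarith
      linarith
    have ht' : (1 - t) * (f x₀ - f x) = (f x₀ - f x) - t * (f x₀ - f x) := by ring
    have htval : t * (f y₀ - f x) = f x₀ - f x := div_mul_cancel₀ _ (ne_of_gt hden)
    have : (1 - t) * g x = (1 - t) * (α * f x + (g x₀ - α * f x₀)) := by
      have expand : (1 - t) * (α * f x + (g x₀ - α * f x₀)) =
          (1 - t) * g x₀ - α * ((f x₀ - f x) - t * (f x₀ - f x)) := by ring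
      rw [expand]
      -- need: (1-t) g x = (1-t) g x₀ - α((fx₀-fx) - t(fx₀-fx))
      -- from hgx: g x₀ = t g y₀ + (1-t) g x  ⇒ (1-t) g x = g x₀ - t g y₀
      -- α * t * (f y₀ - f x₀) = t * (g y₀ - g x₀) since α d = gy₀-gx₀
      have hαt : α * (t * d) = t * (g y₀ - g x₀) := by
        rw [← mul_assoc, mul_comm α t, mul_assoc, hαd]
      have hsplit : t * d = t * (f y₀ - f x) - t * (f x₀ - f x) := by
        simp [hd]; ring
      nlinarith [hgx, hαt, htval, hsplit]
    exact mul_left_cancel₀ ht1 this
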